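/- Let G be a connected k-uniform hypergraph, u a vertex of G, and e_1,...,e_r edges of G not containing u, with v_i ∈ e_i. Let G' be obtained from G by moving the edges: e_i' = (e_i \ {v_i}) ∪ {u}. Let x be the principal eigenvector of Q(G) corresponding to q(G). If x_u ≥ max_{1≤i≤r} x_{v_i}, then q(G') > q(G). -/
import Mathlib


open scoped Classical BigOperators

namespace SLT

variable {V : Type*}

/-- A hypergraph (edge set over vertex type `V`) is `k`-uniform if every edge has exactly `k` vertices. -/
def IsUniform (k : ℕ) (E : Finset (Finset V)) : Prop :=
  ∀ e ∈ E, e.card = k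

/-- The degree of a vertex: the number of edges containing it. -/
noncomputable def degree (E : Finset (Finset V)) (v : V) : ℕ :=
  (E.filter (fun e => v ∈ e)).card

/-- `Chains vs es` : the alternating sequence of vertices `vs` and edges `es` forms a
walk, i.e. consecutive vertices both lie in the corresponding edge. -/
def Chains : List V → List (Finset V) → Prop
  | [_], [] => True
  | u :: v :: vs, e :: es => u ∈ e ∧ v ∈ e ∧ Chains (v :: vs) es
  | _, _ => False

/-- A path in a hypergraph: distinct vertices, distinct edges, all edges in `E`,
with consecutive vertices in the corresponding edge. -/
def IsPath (E : Finset (Finset V)) (vs : List V) (es : List (Finset V)) : Prop :=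
  vs.Nodup ∧ es.Nodup ∧ (∀ e ∈ es, e ∈ E) ∧ Chains vs es

/-- A hypergraph is connected if any two vertices are joined by a path. -/
def HConnected (E : Finset (Finset V)) : Prop :=
  ∀ u v : V, ∃ vs es, IsPath E vs es ∧ vs.head? = some u ∧ vs.getLast? = some v

/-- A cycle: at least two distinct edges, distinct vertices, closing up at the first vertex. -/
def IsCycle (E : Finset (Finset V)) (vs : List V) (es : List (Finset V)) : Prop :=
  2 ≤ es.length ∧ vs.Nodup ∧ es.Nodup ∧ (∀ e ∈ es, e ∈ E) ∧
  ∃ u, vs.head? = some u ∧ Chains (vs ++ [u]) es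

/-- A `k`-uniform supertree: connected and acyclic `k`-uniform hypergraph. -/
def IsSupertree (k : ℕ) (E : Finset (Finset V)) : Prop :=
  IsUniform k E ∧ HConnected E ∧ ∀ vs es, ¬ IsCycle E vs es

/-- The quadratic form `x^T (Q(G) x^{k-1})` of the signless Laplacian tensor of a
`k`-uniform hypergraph. -/
noncomputable def qform (k : ℕ) (E : Finset (Finset V)) (x : V → ℝ) : ℝ :=
  ∑ e ∈ E, ((∑ i ∈ e, x i ^ k) + k * ∏ i ∈ e, x i)

/-- The `i`-th component of `Q(G) x^{k-1}` for a `k`-uniform hypergraph. -/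
noncomputable def Qcomp (k : ℕ) (E : Finset (Finset V)) (x : V → ℝ) (i : V) : ℝ :=
  ∑ e ∈ E.filter (fun e => i ∈ e), (x i ^ (k-1) + ∏ j ∈ e.erase i, x j)

/-- The signless Laplacian spectral radius `q(G)`, via Qi's variational characterization:
the supremum of the quadratic form over nonnegative vectors with `∑ x_v^k = 1`. -/
noncomputable def qrad [Fintype V] (k : ℕ) (E : Finset (Finset V)) : ℝ :=
  sSup {r | ∃ x : V → ℝ, (∀ v, 0 ≤ x v) ∧ (∑ v, x v ^ k) = 1 ∧ r = qform k E x}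

/-- `x` is the principal eigenvector of `Q(G)`: positive, unit (`∑ x_v^k = 1`), and an
eigenvector for the eigenvalue `q(G)`. -/
def IsPrincipalEig [Fintype V] (k : ℕ) (E : Finset (Finset V)) (x : V → ℝ) : Prop :=
  (∀ v, 0 < x v) ∧ (∑ v, x v ^ k) = 1 ∧
  ∀ i, Qcomp k E x i = qrad k E * x i ^ (k-1)


private lemma pow_sub_pow_le' (n : ℕ) (a b : ℝ) (hb : 0 ≤ b) (hab : b ≤ a) :
    a ^ n - b ^ n ≤ n * (a - b) * a ^ (n-1) := by
  rw [← geom_sum₂_mul]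
  have h1 : ∀ i ∈ Finset.range n, a ^ i * b ^ (n-1-i) ≤ a ^ (n-1) := by
    intro i hi
    calc a ^ i * b ^ (n-1-i) ≤ a ^ i * a ^ (n-1-i) :=
        mul_le_mul_of_nonneg_left (pow_le_pow_left₀ hb hab _) (pow_nonneg (hb.trans hab) _)
    _ = a ^ (n-1) := by rw [← pow_add]; congr 1; have := Finset.mem_range.mp hi; omega
  have h2 : (∑ i ∈ Finset.range n, a ^ i * b ^ (n-1-i)) ≤ n * a ^ (n-1) := by
    calc (∑ i ∈ Finset.range n, a ^ i * b ^ (n-1-i)) ≤ ∑ _i ∈ Finset.range n, a ^ (n-1) :=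
      Finset.sum_le_sum h1
    _ = n * a ^ (n-1) := by rw [Finset.sum_const, Finset.card_range, nsmul_eq_mul]
  have hab' : 0 ≤ a - b := by linarith
  calc (∑ i ∈ Finset.range n, a ^ i * b ^ (n-1-i)) * (a - b) ≤ (n * a ^ (n-1)) * (a - b) :=
    mul_le_mul_of_nonneg_right h2 hab'
  _ = n * (a - b) * a ^ (n-1) := by ring

private lemma qform_smul {V : Type*} (k : ℕ) (E : Finset (Finset V)) (hU : IsUniform k E)
    (s : ℝ) (x : V → ℝ) : qform k E (fun v => s * x v) = s ^ k * qform k E x := by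
  unfold qform
  rw [Finset.mul_sum]
  refine Finset.sum_congr rfl fun e he => ?_
  rw [mul_add, Finset.mul_sum]
  congr 1
  · exact Finset.sum_congr rfl fun i _ => by rw [mul_pow]
  · rw [Finset.prod_mul_distrib, Finset.prod_const, hU e he]; ring

private lemma bddAbove_qradSet {V : Type*} [Fintype V] (k : ℕ) (hk : k ≠ 0)
    (E : Finset (Finset V)) :
    BddAbove {r | ∃ x : V → ℝ, (∀ v, 0 ≤ x v) ∧ (∑ v, x v ^ k) = 1 ∧ r = qform k E x} := by
  refine ⟨E.card * (1 + k), ?_⟩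
  rintro rr ⟨y, hy0, hy1, rfl⟩
  have hyle : ∀ v, y v ≤ 1 := by
    intro v
    have h1 : y v ^ k ≤ 1 := by
      rw [← hy1]
      exact Finset.single_le_sum (fun w _ => pow_nonneg (hy0 w) k) (Finset.mem_univ v)
    exact (pow_le_one_iff_of_nonneg (hy0 v) hk).mp h1
  have hb : ∀ e ∈ E, (∑ i ∈ e, y i ^ k) + k * ∏ i ∈ e, y i ≤ 1 + k := by
    intro e _
    have h1 : (∑ i ∈ e, y i ^ k) ≤ 1 := by
      rw [← hy1]
      exact Finset.sum_le_sum_of_subset_of_nonneg (Finset.subset_univ e)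
        (fun w _ _ => pow_nonneg (hy0 w) k)
    have h2 : (∏ i ∈ e, y i) ≤ 1 := Finset.prod_le_one (fun i _ => hy0 i) (fun i _ => hyle i)
    have h3 : (k:ℝ) * ∏ i ∈ e, y i ≤ (k:ℝ) * 1 := mul_le_mul_of_nonneg_left h2 (Nat.cast_nonneg k)
    linarith
  calc qform k E y ≤ ∑ _e ∈ E, ((1:ℝ) + k) := Finset.sum_le_sum hb
  _ = E.card * (1 + k) := by rw [Finset.sum_const, nsmul_eq_mul]

private lemma qform_le_qrad {V : Type*} [Fintype V] (k : ℕ) (hk : k ≠ 0)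
    (E : Finset (Finset V)) (x : V → ℝ) (hx0 : ∀ v, 0 ≤ x v) (hx1 : (∑ v, x v ^ k) = 1) :
    qform k E x ≤ qrad k E :=
  le_csSup (bddAbove_qradSet k hk E) ⟨x, hx0, hx1, rfl⟩

private lemma qform_eig {V : Type*} [Fintype V] (k : ℕ) (hk : k ≠ 0) (E : Finset (Finset V))
    (hU : IsUniform k E) (x : V → ℝ) (hx : IsPrincipalEig k E x) :
    qform k E x = qrad k E := by
  classical
  obtain ⟨hpos, hsum, heig⟩ := hx
  have key : ∑ v, x v * Qcomp k E x v = qform k E x := by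
    unfold Qcomp qform
    simp_rw [Finset.mul_sum, Finset.sum_filter]
    rw [Finset.sum_comm]
    refine Finset.sum_congr rfl fun e he => ?_
    rw [← Finset.sum_filter, Finset.filter_univ_mem]
    have hpt : ∀ v ∈ e, x v * (x v ^ (k-1) + ∏ j ∈ e.erase v, x j)
        = x v ^ k + ∏ j ∈ e, x j := by
      intro v hv
      rw [mul_add, Finset.mul_prod_erase e x hv]
      congr 1
      rw [← pow_succ']
      congr 1
      omega
    rw [Finset.sum_congr rfl hpt, Finset.sum_add_distrib, Finset.sum_const, hU e he,
      nsmul_eq_mul]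
  have key2 : ∑ v, x v * Qcomp k E x v = qrad k E := by
    have hpt : ∀ v : V, x v * Qcomp k E x v = qrad k E * x v ^ k := by
      intro v
      rw [heig v]
      have hxk : x v ^ (k-1) * x v = x v ^ k := by
        rw [← pow_succ]; congr 1; omega
      calc x v * (qrad k E * x v ^ (k-1)) = qrad k E * (x v ^ (k-1) * x v) := by ring
      _ = qrad k E * x v ^ k := by rw [hxk]
    rw [Finset.sum_congr rfl (fun v _ => hpt v), ← Finset.mul_sum, hsum, mul_one]
  rw [← key, key2]

private lemma Qcomp_spec {V : Type*} [DecidableEq V] (k : ℕ) (E : Finset (Finset V))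
    (x : V → ℝ) (i : V) :
    Qcomp k E x i = ∑ e ∈ E.filter (fun e => i ∈ e), (x i ^ (k-1) + ∏ j ∈ e.erase i, x j) := by
  unfold Qcomp
  congr
  funext e
  congr
  exact Subsingleton.elim _ _

/-- the moving-edges lemma: if `x_u ≥ max x_{v_i}`, then moving the edges
`e_1,…,e_r` from `v_1,…,v_r` to `u` strictly increases the signless Laplacian
spectral radius. -/
theorem moving_edges_qrad (k r : ℕ) (hr : 1 ≤ r) {V : Type*} [Fintype V] [DecidableEq V]
    (E : Finset (Finset V)) (hu : IsUniform k E) (hc : HConnected E)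
    (u : V) (es : Fin r → Finset V) (vs : Fin r → V)
    (hesE : ∀ i, es i ∈ E) (hinj : Function.Injective es)
    (hvs : ∀ i, vs i ∈ es i) (hnu : ∀ i, u ∉ es i)
    (es' : Fin r → Finset V) (hes' : ∀ i, es' i = insert u ((es i).erase (vs i)))
    (hinj' : Function.Injective es') (hnew : ∀ i, es' i ∉ E)
    (E' : Finset (Finset V))
    (hE' : E' = (E \ Finset.image es Finset.univ) ∪ Finset.image es' Finset.univ)
    (x : V → ℝ) (hx : IsPrincipalEig k E x)
    (hxu : ∀ i, x (vs i) ≤ x u) :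
    qrad k E < qrad k E' := by
  classical
  obtain ⟨hpos, hsum, heig⟩ := hx
  have hk : k ≠ 0 := by
    have h0 : (es ⟨0, hr⟩).card = k := hu _ (hesE ⟨0, hr⟩)
    have h1 : 0 < (es ⟨0, hr⟩).card := Finset.card_pos.mpr ⟨vs _, hvs _⟩
    omega
  set A := Finset.image es Finset.univ with hA
  set A' := Finset.image es' Finset.univ with hA'
  have hAsub : A ⊆ E := by
    intro e he; obtain ⟨i, -, rfl⟩ := Finset.mem_image.mp (hA ▸ he); exact hesE i
  have hA'E : ∀ e ∈ A', e ∉ E := by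
    intro e he; obtain ⟨i, -, rfl⟩ := Finset.mem_image.mp (hA' ▸ he); exact hnew i
  have hdisj : Disjoint (E \ A) A' := by
    rw [Finset.disjoint_right]
    intro e he heE
    exact hA'E e he (Finset.mem_sdiff.mp heE).1
  have hcard' : ∀ i, (es' i).card = k := by
    intro i
    rw [hes' i, Finset.card_insert_of_notMem (fun hmem => hnu i (Finset.mem_of_mem_erase hmem)),
      Finset.card_erase_of_mem (hvs i), hu _ (hesE i)]
    omega
  have hU' : IsUniform k E' := by
    intro e he
    rw [hE'] at he
    rcases Finset.mem_union.mp he with h | h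
    · exact hu e (Finset.mem_sdiff.mp h).1
    · obtain ⟨i, -, rfl⟩ := Finset.mem_image.mp (hA' ▸ h)
      exact hcard' i
  set c := qrad k E with hc
  -- the quadratic form does not decrease when moving edges
  have hterm : ∀ i : Fin r,
      ((∑ j ∈ es i, x j ^ k) + k * ∏ j ∈ es i, x j)
        ≤ (∑ j ∈ es' i, x j ^ k) + k * ∏ j ∈ es' i, x j := by
    intro i
    have hvsplit : es i = insert (vs i) ((es i).erase (vs i)) := (Finset.insert_erase (hvs i)).symm
    have hvnot : vs i ∉ (es i).erase (vs i) := Finset.notMem_erase _ _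
    have hunot : u ∉ (es i).erase (vs i) := fun h => hnu i (Finset.mem_of_mem_erase h)
    rw [hes' i, Finset.sum_insert hunot, Finset.prod_insert hunot]
    conv_lhs => rw [hvsplit, Finset.sum_insert hvnot, Finset.prod_insert hvnot]
    have h1 : x (vs i) ^ k ≤ x u ^ k := pow_le_pow_left₀ (hpos (vs i)).le (hxu i) k
    have hP : 0 ≤ ∏ j ∈ (es i).erase (vs i), x j :=
      Finset.prod_nonneg fun j _ => (hpos j).le
    have h2 : x (vs i) * ∏ j ∈ (es i).erase (vs i), x j
        ≤ x u * ∏ j ∈ (es i).erase (vs i), x j :=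
      mul_le_mul_of_nonneg_right (hxu i) hP
    have h3 := mul_le_mul_of_nonneg_left h2 (Nat.cast_nonneg (α := ℝ) k)
    linarith
  have hqE'x : c ≤ qform k E' x := by
    have h1 : qform k E x = c := qform_eig k hk E hu x ⟨hpos, hsum, heig⟩
    have h2 : qform k E' x = qform k E x
        - (∑ i, ((∑ j ∈ es i, x j ^ k) + k * ∏ j ∈ es i, x j))
        + ∑ i, ((∑ j ∈ es' i, x j ^ k) + k * ∏ j ∈ es' i, x j) := by
      unfold qform
      rw [hE', Finset.sum_union hdisj, Finset.sum_sdiff_eq_sub hAsub, hA, hA',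
        Finset.sum_image (fun a _ b _ h => hinj h), Finset.sum_image (fun a _ b _ h => hinj' h)]
    have h3 : (∑ i, ((∑ j ∈ es i, x j ^ k) + k * ∏ j ∈ es i, x j))
        ≤ ∑ i, ((∑ j ∈ es' i, x j ^ k) + k * ∏ j ∈ es' i, x j) :=
      Finset.sum_le_sum fun i _ => hterm i
    rw [h2, h1]
    linarith
  -- decomposition of the edges at u
  have hmemA'u : ∀ e ∈ A', u ∈ e := by
    intro e he; obtain ⟨i, -, rfl⟩ := Finset.mem_image.mp (hA' ▸ he)
    rw [hes' i]; exact Finset.mem_insert_self u _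
  have hFeq : E'.filter (fun e => u ∈ e) = (E.filter (fun e => u ∈ e)) ∪ A' := by
    ext e
    simp only [Finset.mem_filter, Finset.mem_union, hE', Finset.mem_sdiff]
    constructor
    · rintro ⟨h1 | h1, h2⟩
      · exact Or.inl ⟨h1.1, h2⟩
      · exact Or.inr h1
    · rintro (⟨h1, h2⟩ | h1)
      · refine ⟨Or.inl ⟨h1, ?_⟩, h2⟩
        intro hmem
        obtain ⟨i, -, rfl⟩ := Finset.mem_image.mp (hA ▸ hmem)
        exact hnu i h2
      · exact ⟨Or.inr h1, hmemA'u e h1⟩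
  have hdisjF : Disjoint (E.filter (fun e => u ∈ e)) A' := by
    rw [Finset.disjoint_right]
    intro e he heF
    exact hA'E e he (Finset.mem_filter.mp heF).1
  set S := ∑ i : Fin r, (x u ^ (k-1) + ∏ j ∈ (es' i).erase u, x j) with hS
  have hQu : Qcomp k E' x u = c * x u ^ (k-1) + S := by
    rw [Qcomp_spec, hFeq, Finset.sum_union hdisjF, hA',
      Finset.sum_image (fun a _ b _ h => hinj' h)]
    have h1 : ∑ e ∈ E.filter (fun e => u ∈ e), (x u ^ (k-1) + ∏ j ∈ e.erase u, x j)
        = c * x u ^ (k-1) := by rw [← Qcomp_spec]; exact heig u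
    rw [h1]
  have hSpos : 0 < S := by
    rw [hS]
    apply Finset.sum_pos
    · intro i _
      have h1 : 0 < ∏ j ∈ (es' i).erase u, x j := Finset.prod_pos fun j _ => hpos j
      have h2 : 0 < x u ^ (k-1) := pow_pos (hpos u) _
      linarith
    · exact ⟨⟨0, hr⟩, Finset.mem_univ _⟩
  set F := E'.filter (fun e => u ∈ e) with hF
  set d' := (F.card : ℝ) with hd'
  set P' := ∑ e ∈ F, ∏ j ∈ e.erase u, x j with hP'
  have hQu2 : Qcomp k E' x u = d' * x u ^ (k-1) + P' := by
    rw [Qcomp_spec, ← hF, Finset.sum_add_distrib, Finset.sum_const, nsmul_eq_mul, hd', hP']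
  have hPS : P' = (c - d') * x u ^ (k-1) + S := by
    have h1 := hQu.symm.trans hQu2
    nlinarith [h1]
  have hP'pos : 0 < P' := by
    rw [hP']
    apply Finset.sum_pos (fun e _ => Finset.prod_pos fun j _ => hpos j)
    refine ⟨es' ⟨0, hr⟩, ?_⟩
    rw [hF, Finset.mem_filter]
    constructor
    · rw [hE']
      exact Finset.mem_union_right _ (hA' ▸ Finset.mem_image_of_mem es' (Finset.mem_univ _))
    · rw [hes']; exact Finset.mem_insert_self u _
  -- choose a small perturbation t
  have hx0 : (c - d') * (x u + 0) ^ (k-1) < P' := by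
    rw [add_zero, hPS]; linarith
  have hcont : Filter.Tendsto (fun t : ℝ => (c - d') * (x u + t) ^ (k-1)) (nhds 0)
      (nhds ((c - d') * (x u + 0) ^ (k-1))) := by
    apply Continuous.tendsto'
    · continuity
    · rfl
  have hev : ∀ᶠ t in nhds (0:ℝ), (c - d') * (x u + t) ^ (k-1) < P' :=
    hcont.eventually_lt_const hx0
  obtain ⟨t, hkey, ht0⟩ :=
    ((hev.filter_mono nhdsWithin_le_nhds).and (eventually_mem_nhdsWithin
      (s := Set.Ioi (0:ℝ)) (a := (0:ℝ)))).exists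
  have ht0' : (0:ℝ) < t := ht0
  set δ := (x u + t) ^ k - x u ^ k with hδ
  have hδ0 : 0 ≤ δ := by
    have h1 : x u ^ k ≤ (x u + t) ^ k := pow_le_pow_left₀ (hpos u).le (by linarith) k
    rw [hδ]; linarith
  have hδle : δ ≤ k * t * (x u + t) ^ (k-1) := by
    have h1 := pow_sub_pow_le' k (x u + t) (x u) (hpos u).le (by linarith)
    rw [add_sub_cancel_left] at h1
    rw [hδ]; exact h1
  -- the perturbed vector
  set y := Function.update x u (x u + t) with hy
  have hyu : y u = x u + t := Function.update_self u _ x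
  have hyv : ∀ v, v ≠ u → y v = x v := fun v hv => Function.update_of_ne hv _ x
  have hypos : ∀ v, 0 < y v := by
    intro v
    by_cases hv : v = u
    · subst hv; rw [hyu]; have := hpos v; linarith
    · rw [hyv v hv]; exact hpos v
  have hysum : (∑ v, y v ^ k) = 1 + δ := by
    rw [← Finset.add_sum_erase _ _ (Finset.mem_univ u), hyu]
    have h1 : ∀ v ∈ Finset.univ.erase u, y v ^ k = x v ^ k := by
      intro v hv
      rw [hyv v (Finset.ne_of_mem_erase hv)]
    rw [Finset.sum_congr rfl h1]
    have h2 : ∑ v ∈ Finset.univ.erase u, x v ^ k = 1 - x u ^ k := by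
      have h3 := Finset.add_sum_erase Finset.univ (fun v => x v ^ k) (Finset.mem_univ u)
      rw [hsum] at h3
      linarith
    rw [h2, hδ]; ring
  have hedge : ∀ e, u ∈ e →
      ((∑ j ∈ e, y j ^ k) + k * ∏ j ∈ e, y j)
        = ((∑ j ∈ e, x j ^ k) + k * ∏ j ∈ e, x j)
          + (δ + k * t * ∏ j ∈ e.erase u, x j) := by
    intro e he
    have herase : ∀ j ∈ e.erase u, y j = x j := fun j hj => hyv j (Finset.ne_of_mem_erase hj)
    have hsum' : ∑ j ∈ e, y j ^ k = (∑ j ∈ e, x j ^ k) + δ := by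
      rw [← Finset.add_sum_erase _ _ he, ← Finset.add_sum_erase _ (fun j => x j ^ k) he,
        Finset.sum_congr rfl (fun j hj => by rw [herase j hj]), hyu, hδ]
      ring
    have hprod : ∏ j ∈ e, y j = (∏ j ∈ e, x j) + t * ∏ j ∈ e.erase u, x j := by
      rw [← Finset.mul_prod_erase e y he, ← Finset.mul_prod_erase e x he,
        Finset.prod_congr rfl herase, hyu]
      ring
    rw [hsum', hprod]
    ring
  have hedge0 : ∀ e, u ∉ e →
      ((∑ j ∈ e, y j ^ k) + k * ∏ j ∈ e, y j)
        = ((∑ j ∈ e, x j ^ k) + k * ∏ j ∈ e, x j) := by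
    intro e he
    have h1 : ∀ j ∈ e, y j = x j := fun j hj => hyv j (fun h => he (h ▸ hj))
    rw [Finset.sum_congr rfl (fun j hj => by rw [h1 j hj]), Finset.prod_congr rfl h1]
  have hqy : qform k E' y = qform k E' x + d' * δ + k * t * P' := by
    unfold qform
    have h1 : ∀ e ∈ E', ((∑ j ∈ e, y j ^ k) + k * ∏ j ∈ e, y j)
        = ((∑ j ∈ e, x j ^ k) + k * ∏ j ∈ e, x j)
          + (if u ∈ e then δ + k * t * ∏ j ∈ e.erase u, x j else 0) := by
      intro e _
      by_cases he : u ∈ e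
      · rw [if_pos he, hedge e he]
      · rw [if_neg he, hedge0 e he, add_zero]
    rw [Finset.sum_congr rfl h1, Finset.sum_add_distrib, ← Finset.sum_filter, ← hF]
    have h2 : ∑ e ∈ F, (δ + ↑k * t * ∏ j ∈ e.erase u, x j)
        = d' * δ + ↑k * t * P' := by
      rw [Finset.sum_add_distrib, Finset.sum_const, nsmul_eq_mul, ← Finset.mul_sum, hd', hP']
    rw [h2]
    ring
  have hktP : (c - d') * δ < k * t * P' := by
    have hkpos : (0:ℝ) < k := by
      exact_mod_cast Nat.pos_of_ne_zero hk
    rcases le_or_gt (c - d') 0 with hcd | hcd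
    · have h1 : (c - d') * δ ≤ 0 := mul_nonpos_of_nonpos_of_nonneg hcd hδ0
      have h2 : 0 < k * t * P' := by positivity
      linarith
    · have h1 : (c - d') * δ ≤ (c - d') * (k * t * (x u + t) ^ (k-1)) :=
        mul_le_mul_of_nonneg_left hδle hcd.le
      have h2 : (c - d') * (k * t * (x u + t) ^ (k-1))
          = (k * t) * ((c - d') * (x u + t) ^ (k-1)) := by ring
      have h3 : (k * t) * ((c - d') * (x u + t) ^ (k-1)) < (k * t) * P' :=
        mul_lt_mul_of_pos_left hkey (by positivity)
      have h4 : (k:ℝ) * t * P' = (k * t) * P' := by ring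
      rw [h4]; linarith
  have hmain : c * (1 + δ) < qform k E' y := by
    have h1 : c * (1 + δ) = c + d' * δ + (c - d') * δ := by ring
    rw [hqy, h1]
    linarith
  -- normalize and conclude
  have h1δ : (0:ℝ) < 1 + δ := by linarith
  set s := (1 + δ) ^ (-(1:ℝ)/k) with hs
  have hs0 : 0 ≤ s := Real.rpow_nonneg h1δ.le _
  have hsk : s ^ k = (1 + δ)⁻¹ := by
    rw [hs, ← Real.rpow_natCast ((1+δ) ^ (-(1:ℝ)/k)) k, ← Real.rpow_mul h1δ.le]
    rw [show (-(1:ℝ)/k) * (k:ℝ) = -1 by field_simp]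
    exact Real.rpow_neg_one _
  have hz0 : ∀ v, 0 ≤ s * y v := fun v => mul_nonneg hs0 (hypos v).le
  have hzsum : (∑ v, (s * y v) ^ k) = 1 := by
    simp only [mul_pow]
    rw [← Finset.mul_sum, hysum, hsk]
    exact inv_mul_cancel₀ (ne_of_gt h1δ)
  have hzform : qform k E' (fun v => s * y v) = (1 + δ)⁻¹ * qform k E' y := by
    rw [qform_smul k E' hU' s y, hsk]
  have hcz : c < qform k E' (fun v => s * y v) := by
    rw [hzform]
    have h1 : (1 + δ)⁻¹ * (c * (1 + δ)) < (1 + δ)⁻¹ * qform k E' y :=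
      mul_lt_mul_of_pos_left hmain (inv_pos.mpr h1δ)
    calc c = (1 + δ)⁻¹ * (c * (1 + δ)) := by field_simp
    _ < _ := h1
  exact lt_of_lt_of_le hcz (qform_le_qrad k hk E' (fun v => s * y v) hz0 hzsum)


end SLT
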